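/- arXiv:2409.06508 — 3 statements merged into one kernel-verified Lean document; each statement's English description precedes it below -/
import Mathlib

section
/- Let H be a complex Hilbert space, T a nonnegative self-adjoint operator, W a bounded symmetric operator, and set x + iy = ⟨φ, (T + A + W)φ⟩ for a unit vector φ ∈ D(T), where A is a symmetric perturbation satisfying |Im⟨φ, Aφ⟩| ≤ 2|a|·‖T^{1/2}φ‖ and Re⟨φ, Aφ⟩ ≥ −a², for a fixed a ∈ ℝ. Then x ≥ −a² + inf spec(W) and |y| ≤ 2|a|·sqrt(x + a² − inf spec(W)). -/
/-- Numerical-range estimate in the Combes–Thomas argument. Let `T` be a nonnegative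
symmetric operator, `W` a bounded symmetric operator with `inf spec W ≥ w`, and `A` a
perturbation satisfying `|Im⟨φ, Aφ⟩| ≤ 2|a|·‖T^{1/2}φ‖ = 2|a|·√(Re⟨φ, Tφ⟩)` and
`Re⟨φ, Aφ⟩ ≥ −a²`, for a unit vector `φ`. Writing `x + iy = ⟨φ, (T + A + W)φ⟩`, one has
`x ≥ −a² + w` and `|y| ≤ 2|a|·√(x + a² − w)`. -/
theorem stmt_11 {H : Type*} [NormedAddCommGroup H] [InnerProductSpace ℂ H]
    (T A : H →ₗ[ℂ] H) (W : H →L[ℂ] H) (a w : ℝ) (φ : H) (hφ : ‖φ‖ = 1)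
    (hT : ∀ ψ : H, 0 ≤ (inner ℂ ψ (T ψ) : ℂ).re ∧ (inner ℂ ψ (T ψ) : ℂ).im = 0)
    (hW : ∀ ψ : H, ‖ψ‖ = 1 → w ≤ (inner ℂ ψ (W ψ) : ℂ).re ∧ (inner ℂ ψ (W ψ) : ℂ).im = 0)
    (hAim : |(inner ℂ φ (A φ) : ℂ).im| ≤ 2 * |a| * Real.sqrt (inner ℂ φ (T φ) : ℂ).re)
    (hAre : -(a ^ 2) ≤ (inner ℂ φ (A φ) : ℂ).re) :
    (inner ℂ φ (T φ + A φ + W φ) : ℂ).re ≥ -(a ^ 2) + w ∧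
    |(inner ℂ φ (T φ + A φ + W φ) : ℂ).im| ≤
      2 * |a| * Real.sqrt ((inner ℂ φ (T φ + A φ + W φ) : ℂ).re + a ^ 2 - w) := by
  obtain ⟨hTre, hTim⟩ := hT φ
  obtain ⟨hWre, hWim⟩ := hW φ hφ
  have hsum : (inner ℂ φ (T φ + A φ + W φ) : ℂ) =
      (inner ℂ φ (T φ) : ℂ) + inner ℂ φ (A φ) + inner ℂ φ (W φ) := by
    rw [inner_add_right, inner_add_right]
  have hre : (inner ℂ φ (T φ + A φ + W φ) : ℂ).re =
      (inner ℂ φ (T φ) : ℂ).re + (inner ℂ φ (A φ) : ℂ).re + (inner ℂ φ (W φ) : ℂ).re := by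
    rw [hsum]; simp
  have him : (inner ℂ φ (T φ + A φ + W φ) : ℂ).im = (inner ℂ φ (A φ) : ℂ).im := by
    rw [hsum]; simp [hTim, hWim]
  constructor
  · rw [hre]; linarith
  · rw [him]
    refine hAim.trans ?_
    have h1 : (inner ℂ φ (T φ) : ℂ).re ≤ (inner ℂ φ (T φ + A φ + W φ) : ℂ).re + a ^ 2 - w := by
      rw [hre]; linarith
    gcongr
end

section
/- Let a, b ∈ ℝ, C_V ≥ 1, L ≥ 1, and z ∈ ℂ with Im z ≠ 0. Define Q := {x + iy ∈ ℂ : x ≥ −a² − C_V·L, |y| ≤ 2|a|·sqrt(x + a² + C_V·L)}. If |a| ≤ min{1, |Im z|/(4·sqrt(Re z + 2 + C_V·L))} and Re z + 2 + C_V·L > 0, then dist(z, Q) ≥ min{1, |Im z|/2}. -/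
/-- Distance estimate from `z` to the parabola-type region
`Q = {x + iy : x ≥ −a² − C_V L, |y| ≤ 2|a|√(x + a² + C_V L)}`:
if `|a| ≤ min{1, |Im z|/(4√(Re z + 2 + C_V L))}` and `Re z + 2 + C_V L > 0`, then
`dist(z, Q) ≥ min{1, |Im z|/2}`. -/
theorem stmt_12 (a : ℝ) (CV L : ℝ) (z : ℂ) (hCV : 1 ≤ CV) (hL : 1 ≤ L)
    (hz : z.im ≠ 0) (hpos : 0 < z.re + 2 + CV * L)
    (ha : |a| ≤ min 1 (|z.im| / (4 * Real.sqrt (z.re + 2 + CV * L)))) :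
    ∀ w ∈ {w : ℂ | -a ^ 2 - CV * L ≤ w.re ∧
        |w.im| ≤ 2 * |a| * Real.sqrt (w.re + a ^ 2 + CV * L)},
      min 1 (|z.im| / 2) ≤ ‖z - w‖ := by
  intro w hw
  obtain ⟨hx, hy⟩ := hw
  have ha1 : |a| ≤ 1 := le_trans ha (min_le_left _ _)
  have ha2 : |a| ≤ |z.im| / (4 * Real.sqrt (z.re + 2 + CV * L)) :=
    le_trans ha (min_le_right _ _)
  have hs : 0 < Real.sqrt (z.re + 2 + CV * L) := Real.sqrt_pos.2 hpos
  rcases le_or_gt 1 (|z.re - w.re|) with h | h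
  · refine le_trans (min_le_left _ _) ?_
    calc (1 : ℝ) ≤ |z.re - w.re| := h
    _ = |(z - w).re| := by simp
    _ ≤ ‖z - w‖ := Complex.abs_re_le_norm _
  · have hwre : w.re ≤ z.re + 1 := by
      have := (abs_lt.1 h).1; linarith
    have ha2' : a ^ 2 ≤ 1 := by nlinarith [sq_abs a, abs_nonneg a]
    have hmono : Real.sqrt (w.re + a ^ 2 + CV * L) ≤ Real.sqrt (z.re + 2 + CV * L) :=
      Real.sqrt_le_sqrt (by linarith)
    have hy2 : |w.im| ≤ |z.im| / 2 := by
      calc |w.im| ≤ 2 * |a| * Real.sqrt (w.re + a ^ 2 + CV * L) := hy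
      _ ≤ 2 * |a| * Real.sqrt (z.re + 2 + CV * L) :=
          mul_le_mul_of_nonneg_left hmono (by positivity)
      _ ≤ 2 * (|z.im| / (4 * Real.sqrt (z.re + 2 + CV * L))) * Real.sqrt (z.re + 2 + CV * L) := by
          apply mul_le_mul_of_nonneg_right _ hs.le
          linarith
      _ = |z.im| / 2 := by field_simp; ring
    refine le_trans (min_le_right _ _) ?_
    calc |z.im| / 2 ≤ |z.im| - |w.im| := by linarith
    _ ≤ |z.im - w.im| := abs_sub_abs_le_abs_sub _ _
    _ = |(z - w).im| := by simp
    _ ≤ ‖z - w‖ := Complex.abs_im_le_norm _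
end

section
/- Let μ_ω = Σ_γ v_γ δ_{y_γ} be a Poisson point process on ℝ^d with unit intensity and i.i.d. weights v_γ (independent of the points) satisfying E|v₁|^{d+1} < ∞. For Z > 0 define the event Ω_Z = {ω : ∫_{Q_k} d|μ_ω| ≤ Z⟨k⟩ for all k ∈ ℤ^d}, where Q_k = {y : |y − k|_∞ ≤ 1} and ⟨k⟩ = sqrt(1 + |k|²). Then P(Ω_Z^c) = O(Z^{−d−1}); in particular P(Ω_Z) → 1 as Z → ∞. -/
open MeasureTheory ProbabilityTheory Filter
open scoped ENNReal NNReal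


-- Aux1: power mean inequality for finsets in ENNReal
lemma aux_pow_sum {ι : Type*} (s : Finset ι) (f : ι → ℝ≥0∞) (m : ℕ) :
    (∑ i ∈ s, f i) ^ (m + 1) ≤ (s.card : ℝ≥0∞) ^ m * ∑ i ∈ s, f i ^ (m + 1) := by
  by_cases htop : ∃ i ∈ s, f i = ⊤
  · obtain ⟨i, hi, hfi⟩ := htop
    have h1 : (∑ j ∈ s, f j ^ (m+1)) = ⊤ := by
      refine ENNReal.sum_eq_top.2 ⟨i, hi, by simp [hfi]⟩
    have hcard : (1:ℝ≥0∞) ≤ (s.card : ℝ≥0∞) ^ m := by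
      have : 1 ≤ s.card := Finset.card_pos.2 ⟨i, hi⟩
      exact one_le_pow_of_one_le' (by exact_mod_cast this) m
    calc (∑ i ∈ s, f i) ^ (m+1) ≤ ⊤ := le_top
    _ = (s.card : ℝ≥0∞) ^ m * ∑ i ∈ s, f i ^ (m+1) := by
        rw [h1, ENNReal.mul_top]
        intro h
        exact absurd h (by positivity)
  · push_neg at htop
    set g : ι → ℝ := fun i => (f i).toReal with hg
    have hge : ∀ i ∈ s, f i = ENNReal.ofReal (g i) := fun i hi => by
      simp [hg, ENNReal.ofReal_toReal (htop i hi)]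
    have hgnn : ∀ i ∈ s, 0 ≤ g i := fun i _ => ENNReal.toReal_nonneg
    have hreal := pow_sum_le_card_mul_sum_pow (s := s) (f := g) hgnn m
    calc (∑ i ∈ s, f i) ^ (m+1) = ENNReal.ofReal ((∑ i ∈ s, g i) ^ (m+1)) := by
          rw [Finset.sum_congr rfl hge, ← ENNReal.ofReal_sum_of_nonneg hgnn,
            ENNReal.ofReal_pow (Finset.sum_nonneg hgnn)]
      _ ≤ ENNReal.ofReal ((s.card : ℝ) ^ m * ∑ i ∈ s, g i ^ (m+1)) :=
          ENNReal.ofReal_le_ofReal hreal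
      _ = (s.card : ℝ≥0∞) ^ m * ∑ i ∈ s, f i ^ (m+1) := by
          rw [ENNReal.ofReal_mul (by positivity),
            ENNReal.ofReal_sum_of_nonneg (fun i hi => by positivity)]
          congr 1
          · rw [← ENNReal.ofReal_natCast s.card, ← ENNReal.ofReal_pow (Nat.cast_nonneg _)]
          · exact Finset.sum_congr rfl fun i hi => by
              rw [hge i hi, ← ENNReal.ofReal_pow (hgnn i hi)]

-- Aux2: tsum power-mean bound
lemma aux_tsum_pow (w : ℕ → ℝ≥0∞) (A : Set ℕ) (m : ℕ) (hm : 1 ≤ m) :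
    (∑' γ, A.indicator w γ) ^ (m + 1) ≤
      (∑' γ, A.indicator (fun _ => (1:ℝ≥0∞)) γ) ^ m *
        ∑' γ, A.indicator (fun γ => w γ ^ (m+1)) γ := by
  classical
  have hN : (∑' γ, A.indicator (fun _ => (1:ℝ≥0∞)) γ) = A.encard := by
    rw [← tsum_subtype A (fun _ => (1:ℝ≥0∞))]
    exact ENNReal.tsum_set_one A
  by_cases hfin : A.Finite
  · have hsub : Function.support (A.indicator w) ⊆ hfin.toFinset := by
      intro γ hγ
      have := Set.mem_of_indicator_ne_zero hγ
      simpa using this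
    have h1 : (∑' γ, A.indicator w γ) = ∑ γ ∈ hfin.toFinset, w γ := by
      rw [tsum_eq_sum (f := A.indicator w) (s := hfin.toFinset)
        (fun γ hγ => by
          by_contra h
          exact hγ (hsub h))]
      exact Finset.sum_congr rfl fun γ hγ => Set.indicator_of_mem (by simpa using hγ) w
    have h2 : (∑' γ, A.indicator (fun γ => w γ ^ (m+1)) γ) = ∑ γ ∈ hfin.toFinset, w γ ^ (m+1) := by
      rw [tsum_eq_sum (f := A.indicator _) (s := hfin.toFinset)
        (fun γ hγ => Set.indicator_of_notMem (by simpa using hγ) _)]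
      exact Finset.sum_congr rfl fun γ hγ => Set.indicator_of_mem (by simpa using hγ) _
    have h3 : (∑' γ, A.indicator (fun _ => (1:ℝ≥0∞)) γ) = (hfin.toFinset.card : ℝ≥0∞) := by
      rw [hN, hfin.encard_eq_coe_toFinset_card]
      simp
    rw [h1, h2, h3]
    exact aux_pow_sum _ _ m
  · rw [hN, Set.encard_eq_top_iff.2 hfin, ENat.toENNReal_top]
    by_cases hX : (∑' γ, A.indicator w γ) = 0
    · simp [hX]
    · obtain ⟨γ, hγ⟩ : ∃ γ, A.indicator w γ ≠ 0 := by
        by_contra h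
        push_neg at h
        exact hX (by simp [h])
      have hγA : γ ∈ A := Set.mem_of_indicator_ne_zero hγ
      have hwγ : w γ ≠ 0 := by
        rw [Set.indicator_of_mem hγA] at hγ; exact hγ
      have hS : (∑' γ, A.indicator (fun γ => w γ ^ (m+1)) γ) ≠ 0 := by
        intro h
        have : A.indicator (fun γ => w γ ^ (m+1)) γ = 0 :=
          le_antisymm (h ▸ ENNReal.le_tsum γ) bot_le
        rw [Set.indicator_of_mem hγA] at this
        exact hwγ (pow_eq_zero_iff (by omega) |>.1 this)
      have : (⊤:ℝ≥0∞) ^ m * ∑' γ, A.indicator (fun γ => w γ ^ (m+1)) γ = ⊤ := by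
        rw [ENNReal.top_pow (by omega), ENNReal.top_mul hS]
      rw [this]; exact le_top

-- Aux3: tsum over pi types of products
lemma aux_tsum_pi (g : ℤ → ℝ≥0∞) : ∀ m : ℕ,
    (∑' k : Fin m → ℤ, ∏ i, g (k i)) = (∑' n : ℤ, g n) ^ m := by
  intro m
  induction m with
  | zero => rw [tsum_eq_single (fun i => i.elim0) (fun b hb => absurd (funext fun i => i.elim0) hb)]; simp
  | succ m ih =>
    rw [← Equiv.tsum_eq (Fin.consEquiv (fun _ : Fin (m+1) => ℤ)) (fun k => ∏ i, g (k i))]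
    have : ∀ p : ℤ × (Fin m → ℤ),
        (∏ i, g ((Fin.consEquiv (fun _ : Fin (m+1) => ℤ)) p i)) = g p.1 * ∏ i, g (p.2 i) := by
      rintro ⟨a, b⟩
      rw [Fin.prod_univ_succ]
      simp [Fin.consEquiv]
    rw [tsum_congr this, ENNReal.tsum_prod (f := fun (a : ℤ) (b : Fin m → ℤ) => g a * ∏ i, g (b i))]
    simp_rw [ENNReal.tsum_mul_left, ENNReal.tsum_mul_right]
    rw [ih, pow_succ]
    ring

lemma aux_int_sum (q : ℝ) (hq : 1 < 2*q) :
    (∑' n : ℤ, ENNReal.ofReal ((1 + (n:ℝ)^2) ^ (-q))) < ⊤ := by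
  have hsum := Real.summable_abs_int_rpow hq
  have hb : ∀ n : ℤ, ENNReal.ofReal ((1 + (n:ℝ)^2) ^ (-q)) ≤
      (if n = 0 then 1 else 0) + ENNReal.ofReal (|(n:ℝ)| ^ (-(2*q))) := by
    intro n
    by_cases hn : n = 0
    · subst hn
      simp [Real.one_rpow]
    · rw [if_neg hn, zero_add]
      refine ENNReal.ofReal_le_ofReal ?_
      have h2 : |(n:ℝ)| ^ (-(2*q)) = ((n:ℝ)^2) ^ (-q) := by
        rw [show -(2*q) = (2:ℕ) * (-q) by push_cast; ring,
          Real.rpow_natCast_mul (abs_nonneg _), sq_abs]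
      rw [h2]
      refine Real.rpow_le_rpow_of_nonpos ?_ (by linarith [sq_nonneg ((n:ℝ))]) (by linarith)
      have : (n:ℝ) ≠ 0 := Int.cast_ne_zero.2 hn
      positivity
  calc (∑' n : ℤ, ENNReal.ofReal ((1 + (n:ℝ)^2) ^ (-q)))
      ≤ ∑' n : ℤ, ((if n = 0 then 1 else 0) + ENNReal.ofReal (|(n:ℝ)| ^ (-(2*q)))) :=
        ENNReal.tsum_le_tsum hb
    _ = (∑' n : ℤ, (if n = 0 then (1:ℝ≥0∞) else 0)) +
        ∑' n : ℤ, ENNReal.ofReal (|(n:ℝ)| ^ (-(2*q))) := ENNReal.tsum_add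
    _ < ⊤ := by
        rw [show (∑' n : ℤ, if n = 0 then (1:ℝ≥0∞) else 0) = 1 from tsum_ite_eq (0:ℤ) (fun _ => (1:ℝ≥0∞)),
          ← ENNReal.ofReal_tsum_of_nonneg (fun n => Real.rpow_nonneg (abs_nonneg _) _) hsum]
        exact ENNReal.add_lt_top.2 ⟨ENNReal.one_lt_top, ENNReal.ofReal_lt_top⟩

lemma aux_prod_le (d : ℕ) (hd : 1 ≤ d) (k : Fin d → ℤ) :
    ∏ i, ((1 + (k i:ℝ)^2) ^ (((d:ℝ)+1)/(2*d))) ≤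
      Real.sqrt (1 + ∑ i, ((k i:ℝ))^2) ^ (d+1) := by
  set q : ℝ := ((d:ℝ)+1)/(2*d) with hqdef
  have hq0 : 0 ≤ q := by positivity
  set S := ∑ i, ((k i:ℝ))^2 with hSdef
  have hS : 0 ≤ S := Finset.sum_nonneg fun i _ => sq_nonneg _
  have h1 : ∏ i, (1 + (k i:ℝ)^2) ≤ (1+S) ^ d := by
    have h := Finset.prod_le_prod (s := Finset.univ) (f := fun i => 1 + (k i:ℝ)^2)
      (g := fun _ => 1 + S) (fun i _ => by positivity)
      (fun i _ => by
        have h2 : (k i:ℝ)^2 ≤ S :=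
          Finset.single_le_sum (fun j _ => sq_nonneg ((k j:ℝ))) (Finset.mem_univ i)
        show 1 + (k i:ℝ)^2 ≤ 1 + S
        linarith)
    simpa using h
  calc ∏ i, ((1 + (k i:ℝ)^2) ^ q)
      = (∏ i, (1 + (k i:ℝ)^2)) ^ q := by
        rw [← Real.finset_prod_rpow _ _ (fun i _ => by positivity) q]
    _ ≤ ((1+S) ^ d) ^ q := by
        refine Real.rpow_le_rpow (Finset.prod_nonneg fun i _ => by positivity) h1 hq0
    _ = (1+S) ^ ((d:ℝ) * q) := (Real.rpow_natCast_mul (by linarith) d q).symm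
    _ = (1+S) ^ ((1/2 : ℝ) * (d+1)) := by
        congr 1
        rw [hqdef]
        have hd0 : (d:ℝ) ≠ 0 := Nat.cast_ne_zero.2 (by omega)
        field_simp
    _ = Real.sqrt (1+S) ^ (d+1) := by
        rw [Real.sqrt_eq_rpow, ← Real.rpow_natCast ((1+S) ^ (1/2:ℝ)) (d+1),
          ← Real.rpow_mul (by linarith)]
        congr 1
        push_cast
        ring

lemma aux_poisson_moment (lam : ℝ) (hlam : 0 ≤ lam) (m : ℕ) :
    (∑' n : ℕ, (n:ℝ≥0∞)^m * ENNReal.ofReal (Real.exp (-lam) * lam^n / n.factorial)) < ⊤ := by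
  have hsum2 : Summable (fun n : ℕ => (n:ℝ)^m * (1/2:ℝ)^n) := by
    simpa using summable_pow_mul_geometric_of_norm_lt_one (R := ℝ) m
      (r := 1/2) (by rw [Real.norm_eq_abs]; rw [abs_of_pos]; norm_num; norm_num)
  obtain ⟨K, hK⟩ := hsum2.tendsto_atTop_zero.bddAbove_range
  simp only [upperBounds, Set.mem_range, forall_exists_index] at hK
  have hKn : ∀ n : ℕ, (n:ℝ)^m * (1/2:ℝ)^n ≤ K := fun n => hK n rfl
  have hK0 : 0 ≤ K := le_trans (by norm_num) (hKn 0)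
  have hmaj : Summable (fun n : ℕ => Real.exp (-lam) * K * ((2*lam)^n / n.factorial)) :=
    (Real.summable_pow_div_factorial (2*lam)).mul_left _
  have hf : Summable (fun n : ℕ => (n:ℝ)^m * (Real.exp (-lam) * lam^n / n.factorial)) := by
    refine Summable.of_nonneg_of_le (fun n => by positivity) (fun n => ?_) hmaj
    have h1 : (n:ℝ)^m * lam^n ≤ K * (2*lam)^n := by
      have : (n:ℝ)^m * lam^n = ((n:ℝ)^m * (1/2)^n) * (2*lam)^n := by
        rw [mul_pow]
        have h2 : ((1/2:ℝ))^n * 2^n = 1 := by rw [← mul_pow]; norm_num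
        linear_combination (-(n:ℝ)^m * lam^n) * h2
      rw [this]
      exact mul_le_mul_of_nonneg_right (hKn n) (by positivity)
    calc (n:ℝ)^m * (Real.exp (-lam) * lam^n / n.factorial)
        = Real.exp (-lam) * ((n:ℝ)^m * lam^n) / n.factorial := by ring
      _ ≤ Real.exp (-lam) * (K * (2*lam)^n) / n.factorial := by
          have hfp : (0:ℝ) < n.factorial := by exact_mod_cast n.factorial_pos
          gcongr
          
      _ = Real.exp (-lam) * K * ((2*lam)^n / n.factorial) := by ring
  have heq : ∀ n : ℕ, (n:ℝ≥0∞)^m * ENNReal.ofReal (Real.exp (-lam) * lam^n / n.factorial)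
      = ENNReal.ofReal ((n:ℝ)^m * (Real.exp (-lam) * lam^n / n.factorial)) := by
    intro n
    rw [ENNReal.ofReal_mul (by positivity), ← ENNReal.ofReal_natCast n,
      ← ENNReal.ofReal_pow (Nat.cast_nonneg n)]
  rw [tsum_congr heq, ← ENNReal.ofReal_tsum_of_nonneg (fun n => by positivity) hf]
  exact ENNReal.ofReal_lt_top

lemma aux_Q_eq (d : ℕ) (k : Fin d → ℤ) :
    {x : EuclideanSpace ℝ (Fin d) | ∀ i, |x i - (k i : ℝ)| ≤ 1} =
      ((MeasurableEquiv.toLp 2 (Fin d → ℝ)).symm) ⁻¹'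
        (Set.univ.pi fun i => Set.Icc ((k i:ℝ) - 1) ((k i:ℝ) + 1)) := by
  ext x
  simp only [Set.mem_setOf_eq, Set.mem_preimage, Set.mem_pi, Set.mem_univ, Set.mem_Icc,
    forall_true_left, MeasurableEquiv.toLp_symm_apply]
  constructor
  · intro h i
    have := abs_le.1 (h i)
    constructor <;> linarith [this.1, this.2]
  · intro h i
    rw [abs_le]
    constructor <;> linarith [(h i).1, (h i).2]

lemma aux_Q_meas (d : ℕ) (k : Fin d → ℤ) :
    MeasurableSet {x : EuclideanSpace ℝ (Fin d) | ∀ i, |x i - (k i : ℝ)| ≤ 1} := by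
  rw [aux_Q_eq]
  exact ((MeasurableEquiv.toLp 2 (Fin d → ℝ)).symm).measurable
    (MeasurableSet.univ_pi fun i => measurableSet_Icc)

lemma aux_Q_vol (d : ℕ) (k : Fin d → ℤ) :
    volume {x : EuclideanSpace ℝ (Fin d) | ∀ i, |x i - (k i : ℝ)| ≤ 1} =
      ENNReal.ofReal 2 ^ d := by
  rw [aux_Q_eq,
    (EuclideanSpace.volume_preserving_symm_measurableEquiv_toLp (Fin d)).measure_preimage
      ((MeasurableSet.univ_pi fun i => measurableSet_Icc).nullMeasurableSet)]
  rw [volume_pi_pi]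
  have : ∀ i : Fin d, volume (Set.Icc ((k i:ℝ) - 1) ((k i:ℝ) + 1)) = ENNReal.ofReal 2 := by
    intro i
    rw [Real.volume_Icc]
    norm_num
  rw [Finset.prod_congr rfl (fun i _ => this i)]
  simp

lemma aux_count (A : Set ℕ) (n : ℕ) :
    (∑' γ, A.indicator (fun _ => (1:ℝ≥0∞)) γ) = (n:ℝ≥0∞) ↔ (A.Finite ∧ A.ncard = n) := by
  rw [← tsum_subtype A (fun _ => (1:ℝ≥0∞)), ENNReal.tsum_set_one]
  constructor
  · intro h
    have hfin : A.Finite := by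
      by_contra hinf
      rw [Set.encard_eq_top_iff.2 hinf, ENat.toENNReal_top] at h
      exact (ENNReal.natCast_ne_top n) h.symm
    refine ⟨hfin, ?_⟩
    rw [hfin.encard_eq_coe_toFinset_card, ENat.toENNReal_coe] at h
    have : hfin.toFinset.card = n := by exact_mod_cast h
    rw [← this, Set.ncard_eq_toFinset_card A hfin]
  · rintro ⟨hfin, hcard⟩
    rw [hfin.encard_eq_coe_toFinset_card, ENat.toENNReal_coe]
    rw [Set.ncard_eq_toFinset_card A hfin] at hcard
    exact_mod_cast hcard

lemma aux_ofReal_prod {ι : Type*} (s : Finset ι) (f : ι → ℝ) (h : ∀ i ∈ s, 0 ≤ f i) :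
    ENNReal.ofReal (∏ i ∈ s, f i) = ∏ i ∈ s, ENNReal.ofReal (f i) := by
  induction s using Finset.cons_induction with
  | empty => simp
  | cons i s hi ih =>
    rw [Finset.prod_cons, Finset.prod_cons,
      ENNReal.ofReal_mul (h i (Finset.mem_cons_self i s)),
      ih (fun j hj => h j (Finset.mem_cons_of_mem hj))]


section MainDefs

variable {Ω : Type*} [MeasurableSpace Ω]

def Qset (d : ℕ) (k : Fin d → ℤ) : Set (EuclideanSpace ℝ (Fin d)) :=
  {x | ∀ i, |x i - (k i : ℝ)| ≤ 1}

lemma Qset_meas (d : ℕ) (k : Fin d → ℤ) : MeasurableSet (Qset d k) := aux_Q_meas d k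

lemma Qset_vol (d : ℕ) (k : Fin d → ℤ) : volume (Qset d k) = ENNReal.ofReal 2 ^ d :=
  aux_Q_vol d k

noncomputable def lamd (d : ℕ) : ℝ := ((ENNReal.ofReal 2) ^ d).toReal

lemma lamd_nonneg (d : ℕ) : 0 ≤ lamd d := ENNReal.toReal_nonneg

noncomputable def momC (d : ℕ) : ℝ≥0∞ :=
  ∑' n : ℕ, (n : ℝ≥0∞) ^ (d+1) *
    ENNReal.ofReal (Real.exp (-(lamd d)) * (lamd d) ^ n / n.factorial)

lemma momC_lt_top (d : ℕ) : momC d < ⊤ := aux_poisson_moment (lamd d) (lamd_nonneg d) (d+1)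

noncomputable def Xk (d : ℕ) (v : ℕ → Ω → ℝ) (y : ℕ → Ω → EuclideanSpace ℝ (Fin d))
    (k : Fin d → ℤ) (ω : Ω) : ℝ≥0∞ :=
  ∑' γ, (Qset d k).indicator (fun _ => (‖v γ ω‖₊ : ℝ≥0∞)) (y γ ω)

noncomputable def Nk (d : ℕ) (y : ℕ → Ω → EuclideanSpace ℝ (Fin d))
    (k : Fin d → ℤ) (ω : Ω) : ℝ≥0∞ :=
  ∑' γ, (Qset d k).indicator (fun _ => (1:ℝ≥0∞)) (y γ ω)

lemma Xk_meas (d : ℕ) (v : ℕ → Ω → ℝ) (y : ℕ → Ω → EuclideanSpace ℝ (Fin d))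
    (hy : ∀ γ, Measurable (y γ)) (hv : ∀ γ, Measurable (v γ)) (k : Fin d → ℤ) :
    Measurable (Xk d v y k) := by
  classical
  unfold Xk
  refine Measurable.ennreal_tsum fun γ => ?_
  simp only [Set.indicator_apply]
  exact Measurable.ite ((hy γ) (Qset_meas d k))
    (measurable_coe_nnreal_ennreal.comp (hv γ).nnnorm) measurable_const

lemma Nk_meas (d : ℕ) (y : ℕ → Ω → EuclideanSpace ℝ (Fin d))
    (hy : ∀ γ, Measurable (y γ)) (k : Fin d → ℤ) :
    Measurable (Nk d y k) := by
  classical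
  unfold Nk
  refine Measurable.ennreal_tsum fun γ => ?_
  simp only [Set.indicator_apply]
  exact Measurable.ite ((hy γ) (Qset_meas d k)) measurable_const measurable_const

lemma Xk_pow_le (d : ℕ) (hd : 1 ≤ d) (v : ℕ → Ω → ℝ)
    (y : ℕ → Ω → EuclideanSpace ℝ (Fin d)) (k : Fin d → ℤ) (ω : Ω) :
    (Xk d v y k ω) ^ (d+1) ≤ (Nk d y k ω) ^ d *
      ∑' γ, (Qset d k).indicator (fun _ => (‖v γ ω‖₊ : ℝ≥0∞) ^ (d+1)) (y γ ω) := by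
  classical
  have h := aux_tsum_pow (fun γ => (‖v γ ω‖₊ : ℝ≥0∞)) {γ | y γ ω ∈ Qset d k} d hd
  have e1 : Xk d v y k ω = ∑' γ, ({γ' | y γ' ω ∈ Qset d k}).indicator
      (fun γ' => (‖v γ' ω‖₊ : ℝ≥0∞)) γ := by
    unfold Xk; exact tsum_congr fun γ => by simp [Set.indicator_apply]
  have e2 : Nk d y k ω = ∑' γ, ({γ' | y γ' ω ∈ Qset d k}).indicator
      (fun _ => (1:ℝ≥0∞)) γ := by
    unfold Nk; exact tsum_congr fun γ => by simp [Set.indicator_apply]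
  have e3 : (∑' γ, (Qset d k).indicator (fun _ => (‖v γ ω‖₊ : ℝ≥0∞) ^ (d+1)) (y γ ω))
      = ∑' γ, ({γ' | y γ' ω ∈ Qset d k}).indicator
        (fun γ' => (‖v γ' ω‖₊ : ℝ≥0∞) ^ (d+1)) γ :=
    tsum_congr fun γ => by simp [Set.indicator_apply]
  rw [e1, e2, e3]
  exact h

end MainDefs


section NMoment

variable {Ω : Type*} [MeasurableSpace Ω]

lemma Nk_moment (P : Measure Ω) [IsProbabilityMeasure P] (d : ℕ)
    (y : ℕ → Ω → EuclideanSpace ℝ (Fin d)) (hy : ∀ γ, Measurable (y γ))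
    (hPoisson : ∀ A : Set (EuclideanSpace ℝ (Fin d)), MeasurableSet A → volume A < ⊤ →
      ∀ n : ℕ, P {ω | {γ : ℕ | y γ ω ∈ A}.Finite ∧ {γ : ℕ | y γ ω ∈ A}.ncard = n} =
        ENNReal.ofReal
          (Real.exp (-(volume A).toReal) * (volume A).toReal ^ n / n.factorial))
    (k : Fin d → ℤ) :
    ∫⁻ ω, (Nk d y k ω) ^ (d+1) ∂P = momC d := by
  classical
  have hNm : Measurable (Nk d y k) := Nk_meas d y hy k
  set Ev : ℕ → Set Ω := fun n => Nk d y k ⁻¹' {(n:ℝ≥0∞)} with hEv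
  have hEm : ∀ n, MeasurableSet (Ev n) := fun n => hNm (measurableSet_singleton _)
  have hNkω : ∀ ω, Nk d y k ω = ∑' γ, ({γ' | y γ' ω ∈ Qset d k}).indicator
      (fun _ => (1:ℝ≥0∞)) γ := by
    intro ω; unfold Nk; exact tsum_congr fun γ => by simp [Set.indicator_apply]
  have hEeq : ∀ n : ℕ, Ev n =
      {ω | {γ : ℕ | y γ ω ∈ Qset d k}.Finite ∧ {γ : ℕ | y γ ω ∈ Qset d k}.ncard = n} := by
    intro n
    ext ω
    simp only [hEv, Set.mem_preimage, Set.mem_singleton_iff, Set.mem_setOf_eq]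
    rw [hNkω ω]
    exact aux_count _ n
  have hvol : volume (Qset d k) < ⊤ := by
    rw [Qset_vol d k]; exact ENNReal.pow_lt_top ENNReal.ofReal_lt_top
  have hlam : (volume (Qset d k)).toReal = lamd d := by rw [Qset_vol d k]; rfl
  have hEP : ∀ n : ℕ, P (Ev n) =
      ENNReal.ofReal (Real.exp (-(lamd d)) * (lamd d) ^ n / n.factorial) := by
    intro n
    rw [hEeq n]
    have h := hPoisson (Qset d k) (Qset_meas d k) hvol n
    rw [hlam] at h
    exact h
  have hdisj : Pairwise (Function.onFun Disjoint Ev) := by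
    intro m n hmn
    refine Set.disjoint_left.2 fun ω h1 h2 => hmn ?_
    simp only [hEv, Set.mem_preimage, Set.mem_singleton_iff] at h1 h2
    exact_mod_cast h1.symm.trans h2
  have hUP : P (⋃ n, Ev n) = 1 := by
    rw [measure_iUnion hdisj hEm]
    set r : ℝ≥0 := Real.toNNReal (lamd d) with hr
    have hrr : (r : ℝ) = lamd d := Real.coe_toNNReal _ (lamd_nonneg d)
    have : ∀ n : ℕ, P (Ev n) = poissonPMF r n := by
      intro n
      rw [hEP n]
      have hcoe : poissonPMF r n = ENNReal.ofReal (Real.exp (-(r:ℝ)) * (r:ℝ)^n / n.factorial) :=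
        rfl
      rw [hcoe, hrr]
    rw [tsum_congr this]
    exact (poissonPMF r).tsum_coe
  have hcompl : P ((⋃ n, Ev n)ᶜ) = 0 := by
    rw [measure_compl (MeasurableSet.iUnion hEm) (measure_ne_top P _), hUP, measure_univ]
    simp
  have h1 := lintegral_add_compl (fun ω => (Nk d y k ω) ^ (d+1)) (MeasurableSet.iUnion hEm)
    (μ := P)
  rw [← h1, setLIntegral_measure_zero _ _ hcompl, add_zero,
    lintegral_iUnion hEm hdisj]
  unfold momC
  congr 1
  funext n
  have hconst : ∫⁻ ω in Ev n, (Nk d y k ω) ^ (d+1) ∂P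
      = ∫⁻ _ in Ev n, ((n:ℝ≥0∞)) ^ (d+1) ∂P := by
    refine setLIntegral_congr_fun (hEm n) (fun ω hω => ?_)
    have : Nk d y k ω = (n:ℝ≥0∞) := hω
    rw [this]
  rw [hconst, setLIntegral_const, hEP n]

end NMoment


section XMoment

variable {Ω : Type*} [MeasurableSpace Ω]

lemma Xk_moment (P : Measure Ω) [IsProbabilityMeasure P] (d : ℕ) (hd : 1 ≤ d)
    (y : ℕ → Ω → EuclideanSpace ℝ (Fin d)) (hy : ∀ γ, Measurable (y γ))
    (v : ℕ → Ω → ℝ) (hv : ∀ γ, Measurable (v γ))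
    (hPoisson : ∀ A : Set (EuclideanSpace ℝ (Fin d)), MeasurableSet A → volume A < ⊤ →
      ∀ n : ℕ, P {ω | {γ : ℕ | y γ ω ∈ A}.Finite ∧ {γ : ℕ | y γ ω ∈ A}.ncard = n} =
        ENNReal.ofReal
          (Real.exp (-(volume A).toReal) * (volume A).toReal ^ n / n.factorial))
    (hiid : ∀ γ, IdentDistrib (v γ) (v 0) P P)
    (hindepY : IndepFun (fun ω γ => v γ ω) (fun ω γ => y γ ω) P)
    (k : Fin d → ℤ) :
    ∫⁻ ω, (Xk d v y k ω) ^ (d+1) ∂P ≤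
      (∫⁻ ω, ((‖v 0 ω‖₊ : ℝ≥0∞)) ^ (d+1) ∂P) * momC d := by
  classical
  set M := ∫⁻ ω, ((‖v 0 ω‖₊ : ℝ≥0∞)) ^ (d+1) ∂P with hM
  -- measurability of the indicator-of-one composed with y γ
  have hind1 : ∀ γ, Measurable fun ω => (Qset d k).indicator (fun _ => (1:ℝ≥0∞)) (y γ ω) := by
    intro γ
    have : (fun ω => (Qset d k).indicator (fun _ => (1:ℝ≥0∞)) (y γ ω))
        = fun ω => if y γ ω ∈ Qset d k then (1:ℝ≥0∞) else 0 := by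
      funext ω; rw [Set.indicator_apply]
    rw [this]
    exact Measurable.ite ((hy γ) (Qset_meas d k)) measurable_const measurable_const
  have hgmeas : ∀ γ, Measurable fun ω =>
      (Nk d y k ω) ^ d * (Qset d k).indicator (fun _ => (1:ℝ≥0∞)) (y γ ω) :=
    fun γ => ((Nk_meas d y hy k).pow_const d).mul (hind1 γ)
  have hfmeas : ∀ γ : ℕ, Measurable fun ω => ((‖v γ ω‖₊ : ℝ≥0∞)) ^ (d+1) :=
    fun γ => (measurable_coe_nnreal_ennreal.comp (hv γ).nnnorm).pow_const _
  calc ∫⁻ ω, (Xk d v y k ω) ^ (d+1) ∂P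
      ≤ ∫⁻ ω, (Nk d y k ω) ^ d *
          ∑' γ, (Qset d k).indicator (fun _ => (‖v γ ω‖₊ : ℝ≥0∞) ^ (d+1)) (y γ ω) ∂P :=
        lintegral_mono fun ω => Xk_pow_le d hd v y k ω
    _ = ∑' γ, ∫⁻ ω, ((‖v γ ω‖₊ : ℝ≥0∞)) ^ (d+1) *
          ((Nk d y k ω) ^ d * (Qset d k).indicator (fun _ => (1:ℝ≥0∞)) (y γ ω)) ∂P := by
        rw [← lintegral_tsum (f := fun γ ω => ((‖v γ ω‖₊ : ℝ≥0∞)) ^ (d+1) * ((Nk d y k ω) ^ d * (Qset d k).indicator (fun _ => (1:ℝ≥0∞)) (y γ ω))) (fun γ => ((hfmeas γ).mul (hgmeas γ)).aemeasurable)]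
        refine lintegral_congr fun ω => ?_
        rw [← ENNReal.tsum_mul_left]
        refine tsum_congr fun γ => ?_
        simp only [Set.indicator_apply]
        split_ifs <;> ring
    _ = ∑' γ : ℕ, (∫⁻ ω, ((‖v γ ω‖₊ : ℝ≥0∞)) ^ (d+1) ∂P) *
          ∫⁻ ω, (Nk d y k ω) ^ d * (Qset d k).indicator (fun _ => (1:ℝ≥0∞)) (y γ ω) ∂P := by
        refine tsum_congr fun γ => ?_
        have hφ : Measurable (fun a : ℕ → ℝ => ((‖a γ‖₊ : ℝ≥0∞)) ^ (d+1)) :=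
          (measurable_coe_nnreal_ennreal.comp (measurable_pi_apply γ).nnnorm).pow_const _
        have hψ : Measurable (fun b : ℕ → EuclideanSpace ℝ (Fin d) =>
            (∑' γ', (Qset d k).indicator (fun _ => (1:ℝ≥0∞)) (b γ')) ^ d *
              (Qset d k).indicator (fun _ => (1:ℝ≥0∞)) (b γ)) := by
          have hb : ∀ γ' : ℕ, Measurable fun b : ℕ → EuclideanSpace ℝ (Fin d) =>
              (Qset d k).indicator (fun _ => (1:ℝ≥0∞)) (b γ') := by
            intro γ'
            have : (fun b : ℕ → EuclideanSpace ℝ (Fin d) =>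
                (Qset d k).indicator (fun _ => (1:ℝ≥0∞)) (b γ'))
                = fun b => if b γ' ∈ Qset d k then (1:ℝ≥0∞) else 0 := by
              funext b; rw [Set.indicator_apply]
            rw [this]
            exact Measurable.ite ((measurable_pi_apply γ') (Qset_meas d k))
              measurable_const measurable_const
          exact ((Measurable.ennreal_tsum hb).pow_const d).mul (hb γ)
        have hIF : IndepFun (fun ω => ((‖v γ ω‖₊ : ℝ≥0∞)) ^ (d+1))
            (fun ω => (Nk d y k ω) ^ d *
              (Qset d k).indicator (fun _ => (1:ℝ≥0∞)) (y γ ω)) P :=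
          hindepY.comp hφ hψ
        exact lintegral_mul_eq_lintegral_mul_lintegral_of_indepFun''
          (hfmeas γ).aemeasurable (hgmeas γ).aemeasurable hIF
    _ = ∑' γ : ℕ, M * ∫⁻ ω, (Nk d y k ω) ^ d *
          (Qset d k).indicator (fun _ => (1:ℝ≥0∞)) (y γ ω) ∂P := by
        refine tsum_congr fun γ => ?_
        congr 1
        have hu : Measurable (fun x : ℝ => ((‖x‖₊ : ℝ≥0∞)) ^ (d+1)) :=
          (measurable_coe_nnreal_ennreal.comp measurable_nnnorm).pow_const _
        exact ((hiid γ).comp hu).lintegral_eq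
    _ = M * ∫⁻ ω, (Nk d y k ω) ^ (d + 1) ∂P := by
        rw [ENNReal.tsum_mul_left]
        congr 1
        rw [← lintegral_tsum (fun γ => (hgmeas γ).aemeasurable)]
        refine lintegral_congr fun ω => ?_
        rw [ENNReal.tsum_mul_left]
        have : (∑' γ, (Qset d k).indicator (fun _ => (1:ℝ≥0∞)) (y γ ω)) = Nk d y k ω := rfl
        rw [this, pow_succ]
    _ = M * momC d := by rw [Nk_moment P d y hy hPoisson k]

end XMoment


section MainBound

variable {Ω : Type*} [MeasurableSpace Ω]

lemma main_bound (P : Measure Ω) [IsProbabilityMeasure P] (d : ℕ) (hd : 1 ≤ d)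
    (y : ℕ → Ω → EuclideanSpace ℝ (Fin d)) (hy : ∀ γ, Measurable (y γ))
    (v : ℕ → Ω → ℝ) (hv : ∀ γ, Measurable (v γ))
    (hPoisson : ∀ A : Set (EuclideanSpace ℝ (Fin d)), MeasurableSet A → volume A < ⊤ →
      ∀ n : ℕ, P {ω | {γ : ℕ | y γ ω ∈ A}.Finite ∧ {γ : ℕ | y γ ω ∈ A}.ncard = n} =
        ENNReal.ofReal
          (Real.exp (-(volume A).toReal) * (volume A).toReal ^ n / n.factorial))
    (hiid : ∀ γ, IdentDistrib (v γ) (v 0) P P)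
    (hindepY : IndepFun (fun ω γ => v γ ω) (fun ω γ => y γ ω) P)
    (hmom : (∫⁻ ω, (‖v 0 ω‖₊ : ℝ≥0∞) ^ (d + 1) ∂P) < ⊤) :
    ∃ c : ℝ, 0 ≤ c ∧ ∀ Z : ℝ, 0 < Z →
      P {ω | ¬ ∀ k : Fin d → ℤ, Xk d v y k ω ≤
          ENNReal.ofReal (Z * Real.sqrt (1 + ∑ i, ((k i : ℝ)) ^ 2))} ≤
        ENNReal.ofReal (c / Z ^ (d + 1)) := by
  classical
  set M := ∫⁻ ω, ((‖v 0 ω‖₊ : ℝ≥0∞)) ^ (d+1) ∂P with hM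
  have hmem : ∀ k, ∫⁻ ω, (Xk d v y k ω) ^ (d+1) ∂P ≤ M * momC d :=
    fun k => Xk_moment P d hd y hy v hv hPoisson hiid hindepY k
  -- the tail sum
  set q : ℝ := ((d:ℝ)+1)/(2*(d:ℝ)) with hqdef
  have hdpos : (0:ℝ) < d := by exact_mod_cast hd
  have hq : 1 < 2*q := by
    rw [hqdef]
    rw [mul_div_assoc']
    rw [lt_div_iff₀ (by linarith)]
    ring_nf
    linarith
  set g : ℤ → ℝ≥0∞ := fun n => ENNReal.ofReal ((1+(n:ℝ)^2) ^ (-q)) with hg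
  have hB : (∑' n : ℤ, g n) < ⊤ := aux_int_sum q hq
  have hT : ∀ k : Fin d → ℤ,
      ((ENNReal.ofReal (Real.sqrt (1 + ∑ i, ((k i:ℝ))^2))) ^ (d+1))⁻¹ ≤ ∏ i, g (k i) := by
    intro k
    set S := ∑ i, ((k i:ℝ))^2 with hS
    have hS0 : 0 ≤ S := Finset.sum_nonneg fun i _ => sq_nonneg _
    have hsq : 0 ≤ Real.sqrt (1+S) := Real.sqrt_nonneg _
    have hprod := aux_prod_le d hd k
    have hpos : 0 < ∏ i, ((1 + (k i:ℝ)^2) ^ q) :=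
      Finset.prod_pos fun i _ => Real.rpow_pos_of_pos (by positivity) q
    have hsqpos : 0 < Real.sqrt (1+S) ^ (d+1) := lt_of_lt_of_le hpos hprod
    calc ((ENNReal.ofReal (Real.sqrt (1+S))) ^ (d+1))⁻¹
        = ENNReal.ofReal ((Real.sqrt (1+S) ^ (d+1))⁻¹) := by
          rw [← ENNReal.ofReal_pow hsq, ← ENNReal.ofReal_inv_of_pos hsqpos]
      _ ≤ ENNReal.ofReal ((∏ i, ((1 + (k i:ℝ)^2) ^ q))⁻¹) := by
          refine ENNReal.ofReal_le_ofReal ?_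
          exact inv_anti₀ hpos hprod
      _ = ∏ i, g (k i) := by
          rw [← Finset.prod_inv_distrib,
            aux_ofReal_prod _ _ (fun i _ => by positivity)]
          refine Finset.prod_congr rfl fun i _ => ?_
          rw [← Real.rpow_neg (by positivity)]
  have hTsum : (∑' k : Fin d → ℤ,
      ((ENNReal.ofReal (Real.sqrt (1 + ∑ i, ((k i:ℝ))^2))) ^ (d+1))⁻¹) ≤ (∑' n : ℤ, g n) ^ d :=
    (ENNReal.tsum_le_tsum hT).trans_eq (aux_tsum_pi g d)
  have hMC : M * momC d ≠ ⊤ :=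
    (ENNReal.mul_lt_top hmom (momC_lt_top d)).ne
  have hfin : M * momC d * (∑' n : ℤ, g n) ^ d ≠ ⊤ :=
    (ENNReal.mul_lt_top (lt_top_iff_ne_top.2 hMC) (ENNReal.pow_lt_top hB)).ne
  refine ⟨(M * momC d * (∑' n : ℤ, g n) ^ d).toReal, ENNReal.toReal_nonneg, ?_⟩
  intro Z hZ
  have hXm : ∀ k, Measurable (Xk d v y k) := fun k => Xk_meas d v y hy hv k
  have hmark : ∀ k : Fin d → ℤ,
      P {ω | ¬ Xk d v y k ω ≤ ENNReal.ofReal (Z * Real.sqrt (1 + ∑ i, ((k i:ℝ))^2))} ≤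
        (M * momC d) * ((ENNReal.ofReal Z) ^ (d+1))⁻¹ *
          ((ENNReal.ofReal (Real.sqrt (1 + ∑ i, ((k i:ℝ))^2))) ^ (d+1))⁻¹ := by
    intro k
    set S := ∑ i, ((k i:ℝ))^2 with hS
    have hS0 : 0 ≤ S := Finset.sum_nonneg fun i _ => sq_nonneg _
    have hsqpos : 0 < Real.sqrt (1+S) := Real.sqrt_pos.2 (by linarith)
    set t : ℝ≥0∞ := ENNReal.ofReal (Z * Real.sqrt (1+S)) with ht
    have ht0 : t ≠ 0 := by
      rw [ht]
      simp only [ne_eq, ENNReal.ofReal_eq_zero, not_le]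
      positivity
    have httop : t ≠ ⊤ := ENNReal.ofReal_ne_top
    have hsub : {ω | ¬ Xk d v y k ω ≤ t} ⊆ {ω | t ^ (d+1) ≤ (Xk d v y k ω) ^ (d+1)} :=
      fun ω hω => pow_le_pow_left₀ zero_le (le_of_lt (not_le.1 hω)) (d+1)
    have hmarkov := mul_meas_ge_le_lintegral₀ (μ := P)
      ((hXm k).pow_const (d+1)).aemeasurable (t ^ (d+1))
    have h2 : P {ω | t ^ (d+1) ≤ (Xk d v y k ω) ^ (d+1)} ≤ (M * momC d) / t ^ (d+1) := by
      rw [ENNReal.le_div_iff_mul_le (Or.inl (pow_ne_zero _ ht0))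
        (Or.inl (ENNReal.pow_ne_top httop))]
      rw [mul_comm]
      exact hmarkov.trans (hmem k)
    have h3 : P {ω | ¬ Xk d v y k ω ≤ t} ≤ (M * momC d) / t ^ (d+1) :=
      (measure_mono hsub).trans h2
    refine h3.trans_eq ?_
    rw [ht, ENNReal.ofReal_mul hZ.le, mul_pow, div_eq_mul_inv,
      ENNReal.mul_inv (Or.inl (pow_ne_zero _ (by
        simp only [ne_eq, ENNReal.ofReal_eq_zero, not_le]; exact hZ)))
        (Or.inl (ENNReal.pow_ne_top ENNReal.ofReal_ne_top)), ← mul_assoc]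
  calc P {ω | ¬ ∀ k : Fin d → ℤ, Xk d v y k ω ≤
        ENNReal.ofReal (Z * Real.sqrt (1 + ∑ i, ((k i:ℝ))^2))}
      = P (⋃ k : Fin d → ℤ, {ω | ¬ Xk d v y k ω ≤
          ENNReal.ofReal (Z * Real.sqrt (1 + ∑ i, ((k i:ℝ))^2))}) := by
        congr 1
        simp only [not_forall]
        exact Set.setOf_exists _
    _ ≤ ∑' k : Fin d → ℤ, P {ω | ¬ Xk d v y k ω ≤
          ENNReal.ofReal (Z * Real.sqrt (1 + ∑ i, ((k i:ℝ))^2))} := measure_iUnion_le _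
    _ ≤ ∑' k : Fin d → ℤ, (M * momC d) * ((ENNReal.ofReal Z) ^ (d+1))⁻¹ *
          ((ENNReal.ofReal (Real.sqrt (1 + ∑ i, ((k i:ℝ))^2))) ^ (d+1))⁻¹ :=
        ENNReal.tsum_le_tsum hmark
    _ = (M * momC d) * ((ENNReal.ofReal Z) ^ (d+1))⁻¹ *
          ∑' k : Fin d → ℤ,
            ((ENNReal.ofReal (Real.sqrt (1 + ∑ i, ((k i:ℝ))^2))) ^ (d+1))⁻¹ :=
        ENNReal.tsum_mul_left
    _ ≤ (M * momC d) * ((ENNReal.ofReal Z) ^ (d+1))⁻¹ * (∑' n : ℤ, g n) ^ d :=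
        mul_le_mul_right hTsum _
    _ = ENNReal.ofReal ((M * momC d * (∑' n : ℤ, g n) ^ d).toReal / Z ^ (d+1)) := by
        rw [mul_right_comm]
        rw [div_eq_mul_inv, ENNReal.ofReal_mul ENNReal.toReal_nonneg]
        congr 1
        · rw [ENNReal.ofReal_toReal hfin]
        · rw [← ENNReal.ofReal_pow hZ.le, ← ENNReal.ofReal_inv_of_pos (pow_pos hZ _)]
  done

end MainBound

/-- For a Poisson point process `{y_γ}` on `ℝ^d` with unit intensity (the number of points in
any finite-volume measurable set `A` is Poisson with mean `vol(A)`) and i.i.d. weights `{v_γ}`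
independent of the points with `E|v₁|^{d+1} < ∞`, define
`X_k(ω) = ∫_{Q_k} d|μ_ω| = Σ_γ |v_γ(ω)| 1_{y_γ(ω) ∈ Q_k}` where
`Q_k = {y : |y − k|_∞ ≤ 1}` and `⟨k⟩ = √(1 + |k|²)`. Then the complement of the event
`Ω_Z = {ω : X_k(ω) ≤ Z⟨k⟩ for all k ∈ ℤ^d}` has probability `O(Z^{−d−1})`; in particular
`P(Ω_Z) → 1` as `Z → ∞`. -/
theorem stmt_13 {Ω : Type*} [MeasurableSpace Ω] (P : Measure Ω) [IsProbabilityMeasure P]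
    (d : ℕ) (hd : 1 ≤ d)
    (y : ℕ → Ω → EuclideanSpace ℝ (Fin d)) (hy : ∀ γ, Measurable (y γ))
    (v : ℕ → Ω → ℝ) (hv : ∀ γ, Measurable (v γ))
    -- the point process has Poisson distributed counts with intensity `volume`
    (hPoisson : ∀ A : Set (EuclideanSpace ℝ (Fin d)), MeasurableSet A → volume A < ⊤ →
      ∀ n : ℕ, P {ω | {γ : ℕ | y γ ω ∈ A}.Finite ∧ {γ : ℕ | y γ ω ∈ A}.ncard = n} =
        ENNReal.ofReal
          (Real.exp (-(volume A).toReal) * (volume A).toReal ^ n / n.factorial))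
    -- the weights are i.i.d. ...
    (hiid : ∀ γ, IdentDistrib (v γ) (v 0) P P)
    (hindep : iIndepFun v P)
    -- ... and independent of the points
    (hindepY : IndepFun (fun ω γ => v γ ω) (fun ω γ => y γ ω) P)
    -- finite (d+1)-st absolute moment of the weights
    (hmom : (∫⁻ ω, (‖v 0 ω‖₊ : ℝ≥0∞) ^ (d + 1) ∂P) < ⊤) :
    (∃ c : ℝ, 0 ≤ c ∧ ∀ Z : ℝ, 0 < Z →
      P {ω | ¬ ∀ k : Fin d → ℤ,
          (∑' γ : ℕ, {x : EuclideanSpace ℝ (Fin d) | ∀ i, |x i - (k i : ℝ)| ≤ 1}.indicator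
              (fun _ => (‖v γ ω‖₊ : ℝ≥0∞)) (y γ ω)) ≤
            ENNReal.ofReal (Z * Real.sqrt (1 + ∑ i, ((k i : ℝ)) ^ 2))} ≤
        ENNReal.ofReal (c / Z ^ (d + 1))) ∧
    Tendsto (fun Z : ℝ =>
      P {ω | ∀ k : Fin d → ℤ,
          (∑' γ : ℕ, {x : EuclideanSpace ℝ (Fin d) | ∀ i, |x i - (k i : ℝ)| ≤ 1}.indicator
              (fun _ => (‖v γ ω‖₊ : ℝ≥0∞)) (y γ ω)) ≤
            ENNReal.ofReal (Z * Real.sqrt (1 + ∑ i, ((k i : ℝ)) ^ 2))})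
      atTop (nhds 1) := by
  classical
  obtain ⟨c, hc0, hc⟩ := main_bound P d hd y hy v hv hPoisson hiid hindepY hmom
  have hXm : ∀ k, Measurable (Xk d v y k) := fun k => Xk_meas d v y hy hv k
  -- identify the sets in the statement with those phrased via `Xk`
  have hbadset : ∀ Z : ℝ, {ω | ¬ ∀ k : Fin d → ℤ,
          (∑' γ : ℕ, {x : EuclideanSpace ℝ (Fin d) | ∀ i, |x i - (k i : ℝ)| ≤ 1}.indicator
              (fun _ => (‖v γ ω‖₊ : ℝ≥0∞)) (y γ ω)) ≤
            ENNReal.ofReal (Z * Real.sqrt (1 + ∑ i, ((k i : ℝ)) ^ 2))}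
      = {ω | ¬ ∀ k : Fin d → ℤ, Xk d v y k ω ≤
            ENNReal.ofReal (Z * Real.sqrt (1 + ∑ i, ((k i : ℝ)) ^ 2))} := fun Z => rfl
  have hgoodset : ∀ Z : ℝ, {ω | ∀ k : Fin d → ℤ,
          (∑' γ : ℕ, {x : EuclideanSpace ℝ (Fin d) | ∀ i, |x i - (k i : ℝ)| ≤ 1}.indicator
              (fun _ => (‖v γ ω‖₊ : ℝ≥0∞)) (y γ ω)) ≤
            ENNReal.ofReal (Z * Real.sqrt (1 + ∑ i, ((k i : ℝ)) ^ 2))}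
      = {ω | ∀ k : Fin d → ℤ, Xk d v y k ω ≤
            ENNReal.ofReal (Z * Real.sqrt (1 + ∑ i, ((k i : ℝ)) ^ 2))} := fun Z => rfl
  constructor
  · refine ⟨c, hc0, fun Z hZ => ?_⟩
    rw [hbadset Z]
    exact hc Z hZ
  · -- measurability of the good sets
    have hgm : ∀ Z : ℝ, MeasurableSet {ω | ∀ k : Fin d → ℤ, Xk d v y k ω ≤
        ENNReal.ofReal (Z * Real.sqrt (1 + ∑ i, ((k i : ℝ)) ^ 2))} := by
      intro Z
      rw [Set.setOf_forall]
      exact MeasurableSet.iInter fun k => measurableSet_le (hXm k) measurable_const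
    have hPg : ∀ Z : ℝ, P {ω | ∀ k : Fin d → ℤ, Xk d v y k ω ≤
          ENNReal.ofReal (Z * Real.sqrt (1 + ∑ i, ((k i : ℝ)) ^ 2))}
        = 1 - P {ω | ¬ ∀ k : Fin d → ℤ, Xk d v y k ω ≤
          ENNReal.ofReal (Z * Real.sqrt (1 + ∑ i, ((k i : ℝ)) ^ 2))} := by
      intro Z
      have h1 : {ω | ¬ ∀ k : Fin d → ℤ, Xk d v y k ω ≤
          ENNReal.ofReal (Z * Real.sqrt (1 + ∑ i, ((k i : ℝ)) ^ 2))}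
          = {ω | ∀ k : Fin d → ℤ, Xk d v y k ω ≤
          ENNReal.ofReal (Z * Real.sqrt (1 + ∑ i, ((k i : ℝ)) ^ 2))}ᶜ := rfl
      rw [h1, prob_compl_eq_one_sub (hgm Z),
        ENNReal.sub_sub_cancel ENNReal.one_ne_top prob_le_one]
    have hb0 : Tendsto (fun Z : ℝ => P {ω | ¬ ∀ k : Fin d → ℤ, Xk d v y k ω ≤
        ENNReal.ofReal (Z * Real.sqrt (1 + ∑ i, ((k i : ℝ)) ^ 2))}) atTop (nhds 0) := by
      have hub : ∀ᶠ Z : ℝ in atTop, P {ω | ¬ ∀ k : Fin d → ℤ, Xk d v y k ω ≤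
          ENNReal.ofReal (Z * Real.sqrt (1 + ∑ i, ((k i : ℝ)) ^ 2))} ≤
          ENNReal.ofReal (c / Z ^ (d+1)) := by
        filter_upwards [eventually_gt_atTop (0:ℝ)] with Z hZ using hc Z hZ
      have hlim : Tendsto (fun Z : ℝ => ENNReal.ofReal (c / Z ^ (d+1))) atTop (nhds 0) := by
        rw [← ENNReal.ofReal_zero]
        refine ENNReal.tendsto_ofReal ?_
        exact Tendsto.div_atTop tendsto_const_nhds (tendsto_pow_atTop (by omega))
      exact tendsto_of_tendsto_of_tendsto_of_le_of_le' tendsto_const_nhds hlim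
        (Filter.Eventually.of_forall fun Z => zero_le) hub
    have hcont : Tendsto (fun x : ℝ≥0∞ => 1 - x) (nhds 0) (nhds 1) := by
      have := (ENNReal.continuous_sub_left (a := 1) ENNReal.one_ne_top).tendsto 0
      simpa using this
    have htend := hcont.comp hb0
    simp only [hgoodset]
    exact htend.congr fun Z => (hPg Z).symm
end
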